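/- Let Q_n be probability distributions on ℤ_{≥0} converging in distribution and in expectation to a distribution Q with mean ν > 1. Then the survival probabilities s_n of Galton–Watson processes with offspring distribution Q_n converge to the survival probability s > 0 of the Galton–Watson process with offspring distribution Q. -/

import Mathlib

open Filter Set

noncomputable def gen (p : ℕ → ℝ) (z : ℝ) : ℝ := ∑' l : ℕ, p l * z ^ l

lemma summable_gen {p : ℕ → ℝ} (hp0 : ∀ l, 0 ≤ p l) (hps : Summable p) {z : ℝ}
    (h0 : 0 ≤ z) (h1 : z ≤ 1) : Summable fun l : ℕ => p l * z ^ l :=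
  hps.of_nonneg_of_le (fun l => mul_nonneg (hp0 l) (pow_nonneg h0 l))
    (fun l => mul_le_of_le_one_right (hp0 l) (pow_le_one₀ h0 h1))

lemma gen_one {p : ℕ → ℝ} (hps : HasSum p 1) : gen p 1 = 1 := by
  simp [gen, hps.tsum_eq]

lemma gen_nonneg {p : ℕ → ℝ} (hp0 : ∀ l, 0 ≤ p l) {z : ℝ} (h0 : 0 ≤ z) : 0 ≤ gen p z :=
  tsum_nonneg fun l => mul_nonneg (hp0 l) (pow_nonneg h0 l)

lemma gen_continuousOn {p : ℕ → ℝ} (hp0 : ∀ l, 0 ≤ p l) (hps : Summable p) :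
    ContinuousOn (gen p) (Icc (0:ℝ) 1) := by
  apply continuousOn_tsum (fun l => (continuousOn_const.mul (continuousOn_pow l))) hps
  intro l x hx
  simp only [Pi.mul_apply]
  rw [Real.norm_eq_abs, abs_mul, abs_of_nonneg (hp0 l), abs_of_nonneg (pow_nonneg hx.1 l)]
  exact mul_le_of_le_one_right (hp0 l) (pow_le_one₀ hx.1 hx.2)

lemma gen_convexOn {p : ℕ → ℝ} (hp0 : ∀ l, 0 ≤ p l) (hps : Summable p) :
    ConvexOn ℝ (Icc (0:ℝ) 1) (gen p) := by
  refine ⟨convex_Icc 0 1, fun x hx y hy a b ha hb hab => ?_⟩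
  have hsx := summable_gen hp0 hps hx.1 hx.2
  have hsy := summable_gen hp0 hps hy.1 hy.2
  have hxy : a • x + b • y ∈ Icc (0:ℝ) 1 := (convex_Icc 0 1) hx hy ha hb hab
  have hsxy := summable_gen hp0 hps hxy.1 hxy.2
  simp only [smul_eq_mul]
  have key : ∀ l : ℕ, p l * (a * x + b * y) ^ l ≤ a * (p l * x ^ l) + b * (p l * y ^ l) := by
    intro l
    have := (convexOn_pow l).2 (mem_Ici.2 hx.1) (mem_Ici.2 hy.1) ha hb hab
    simp only [smul_eq_mul] at this
    calc p l * (a * x + b * y) ^ l ≤ p l * (a * x ^ l + b * y ^ l) :=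
          mul_le_mul_of_nonneg_left this (hp0 l)
      _ = a * (p l * x ^ l) + b * (p l * y ^ l) := by ring
  have hsxy' : Summable fun l : ℕ => p l * (a * x + b * y) ^ l := by
    simpa only [smul_eq_mul] using hsxy
  calc gen p (a * x + b * y) ≤ ∑' l : ℕ, (a * (p l * x ^ l) + b * (p l * y ^ l)) :=
        Summable.tsum_le_tsum key hsxy' ((hsx.mul_left a).add (hsy.mul_left b))
    _ = a * gen p x + b * gen p y := by
        rw [Summable.tsum_add (hsx.mul_left a) (hsy.mul_left b), tsum_mul_left, tsum_mul_left]; rfl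

def fixset (p : ℕ → ℝ) : Set ℝ := {z : ℝ | z ∈ Icc (0:ℝ) 1 ∧ gen p z = z}

lemma one_mem_fixset {p : ℕ → ℝ} (hps : HasSum p 1) : (1:ℝ) ∈ fixset p :=
  ⟨⟨zero_le_one, le_refl 1⟩, gen_one hps⟩

lemma bddBelow_fixset (p : ℕ → ℝ) : BddBelow (fixset p) :=
  ⟨0, fun z hz => hz.1.1⟩

lemma sInf_fixset_mem {p : ℕ → ℝ} (hp0 : ∀ l, 0 ≤ p l) (hps : HasSum p 1) :
    sInf (fixset p) ∈ fixset p := by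
  have hclosed : IsClosed (fixset p) := by
    have : fixset p = Icc (0:ℝ) 1 ∩ (fun z => gen p z - z) ⁻¹' {0} := by
      ext z; simp [fixset, sub_eq_zero, and_comm]
    rw [this]
    exact ContinuousOn.preimage_isClosed_of_isClosed
      ((gen_continuousOn hp0 hps.summable).sub (continuousOn_id)) isClosed_Icc isClosed_singleton
  exact hclosed.csInf_mem ⟨1, one_mem_fixset hps⟩ (bddBelow_fixset p)

lemma exists_fixed_le {p : ℕ → ℝ} (hp0 : ∀ l, 0 ≤ p l) (hps : HasSum p 1) {z0 : ℝ}
    (h0 : 0 ≤ z0) (h1 : z0 ≤ 1) (hlt : gen p z0 < z0) : ∃ w ∈ fixset p, w ≤ z0 := by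
  set g : ℝ → ℝ := fun z => gen p z - z with hg
  have hcont : ContinuousOn g (Icc 0 z0) :=
    ((gen_continuousOn hp0 hps.summable).sub continuousOn_id).mono
      (Icc_subset_Icc le_rfl h1)
  have h00 : (0:ℝ) ∈ Icc (g z0) (g 0) := by
    have e1 : g z0 = gen p z0 - z0 := rfl
    have e2 : g 0 = gen p 0 - 0 := rfl
    have := gen_nonneg hp0 (le_refl (0:ℝ)) (p := p)
    rw [mem_Icc, e1, e2]
    constructor <;> linarith
  obtain ⟨w, hw, hwg⟩ := intermediate_value_Icc' h0 hcont h00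
  refine ⟨w, ⟨⟨hw.1, le_trans hw.2 h1⟩, ?_⟩, hw.2⟩
  have : gen p w - w = 0 := hwg
  linarith

lemma gen_le_of_fixed {p : ℕ → ℝ} (hp0 : ∀ l, 0 ≤ p l) (hps : HasSum p 1) {w z : ℝ}
    (hw : w ∈ fixset p) (hwz : w ≤ z) (hz1 : z ≤ 1) : gen p z ≤ z := by
  rcases eq_or_lt_of_le (le_trans hwz hz1 : w ≤ 1) with h1 | h1
  · have : z = 1 := le_antisymm hz1 (h1 ▸ hwz)
    rw [this, gen_one hps]
  · have hd : (0:ℝ) < 1 - w := by linarith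
    have hd' : (1:ℝ) - w ≠ 0 := ne_of_gt hd
    have ha0 : 0 ≤ (1 - z) / (1 - w) := div_nonneg (by linarith) hd.le
    have hb0 : 0 ≤ (z - w) / (1 - w) := div_nonneg (by linarith) hd.le
    set a : ℝ := (1 - z) / (1 - w) with ha
    set b : ℝ := (z - w) / (1 - w) with hb
    have hab : a + b = 1 := by rw [ha, hb, ← add_div, div_eq_one_iff_eq hd']; ring
    have hz : a • w + b • (1:ℝ) = z := by
      rw [smul_eq_mul, smul_eq_mul, mul_one, ha, hb, div_mul_eq_mul_div, ← add_div,
        div_eq_iff hd']; ring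
    have := (gen_convexOn hp0 hps.summable).2 hw.1 (one_mem_fixset hps).1 ha0 hb0 hab
    rw [hz] at this
    calc gen p z ≤ a • gen p w + b • gen p 1 := this
      _ = a * w + b * 1 := by rw [hw.2, gen_one hps]; rfl
      _ = z := by rw [← hz]; rfl

lemma one_sub_pow_ge {z : ℝ} (h0 : 0 ≤ z) (h1 : z ≤ 1) (l : ℕ) :
    (1 - z) * (l : ℝ) * z ^ l ≤ 1 - z ^ l := by
  have hgeo : (1 - z ^ l) = (∑ i ∈ Finset.range l, z ^ i) * (1 - z) := by
    have := geom_sum_mul z l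
    nlinarith [this]
  have hsum : (l : ℝ) * z ^ l ≤ ∑ i ∈ Finset.range l, z ^ i := by
    calc (l : ℝ) * z ^ l = ∑ _i ∈ Finset.range l, z ^ l := by
          rw [Finset.sum_const, Finset.card_range, nsmul_eq_mul]
      _ ≤ ∑ i ∈ Finset.range l, z ^ i :=
          Finset.sum_le_sum fun i hi =>
            pow_le_pow_of_le_one h0 h1 (le_of_lt (Finset.mem_range.mp hi))
  have h1z : 0 ≤ 1 - z := by linarith
  calc (1 - z) * (l : ℝ) * z ^ l = ((l : ℝ) * z ^ l) * (1 - z) := by ring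
    _ ≤ (∑ i ∈ Finset.range l, z ^ i) * (1 - z) := by
        apply mul_le_mul_of_nonneg_right hsum h1z
    _ = 1 - z ^ l := hgeo.symm

lemma exists_gen_lt {Q : ℕ → ℝ} (hQ0 : ∀ l, 0 ≤ Q l) (hQsum : HasSum Q 1)
    {ν : ℝ} (hν : HasSum (fun l : ℕ => (l : ℝ) * Q l) ν) (hν1 : 1 < ν) :
    ∃ z : ℝ, 0 ≤ z ∧ z < 1 ∧ gen Q z < z := by
  -- a finite partial sum of the mean exceeds 1
  obtain ⟨N, hN⟩ := (hν.tendsto_sum_nat.eventually (eventually_gt_nhds hν1)).exists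
  -- choose z < 1 close to 1 where the finite sum still exceeds 1
  have hcont : Tendsto (fun z : ℝ => ∑ i ∈ Finset.range N, (i : ℝ) * Q i * z ^ i)
      (nhdsWithin 1 (Ioo (0:ℝ) 1)) (nhds (∑ i ∈ Finset.range N, (i : ℝ) * Q i)) := by
    have : ContinuousAt (fun z : ℝ => ∑ i ∈ Finset.range N, (i : ℝ) * Q i * z ^ i) 1 :=
      (continuous_finset_sum _ fun i _ => continuous_const.mul (continuous_pow i)).continuousAt
    have h := this.continuousWithinAt (s := Ioo (0:ℝ) 1)
    simpa [ContinuousWithinAt, mul_one] using h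
  have hev : ∀ᶠ z in nhdsWithin (1:ℝ) (Ioo (0:ℝ) 1),
      1 < ∑ i ∈ Finset.range N, (i : ℝ) * Q i * z ^ i :=
    hcont.eventually (eventually_gt_nhds hN)
  have hne : (nhdsWithin (1:ℝ) (Ioo (0:ℝ) 1)).NeBot :=
    right_nhdsWithin_Ioo_neBot (by norm_num)
  obtain ⟨z, hz1, hz⟩ := (hev.and (eventually_mem_nhdsWithin)).exists
  refine ⟨z, hz.1.le, hz.2, ?_⟩
  have h0 : 0 ≤ z := hz.1.le
  have h1 : z ≤ 1 := hz.2.le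
  -- summabilities
  have hsQ : Summable Q := hQsum.summable
  have hsz := summable_gen hQ0 hsQ h0 h1
  have hslq : Summable fun l : ℕ => (l : ℝ) * Q l := hν.summable
  have hs2 : Summable fun l : ℕ => (1 - z) * (l : ℝ) * Q l * z ^ l := by
    apply hslq.of_nonneg_of_le
    · intro l
      exact mul_nonneg (mul_nonneg (mul_nonneg (by linarith) (Nat.cast_nonneg l)) (hQ0 l))
        (pow_nonneg h0 l)
    · intro l
      calc (1 - z) * (l : ℝ) * Q l * z ^ l ≤ 1 * (l : ℝ) * Q l * 1 := by
            apply mul_le_mul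
            · apply mul_le_mul_of_nonneg_right _ (hQ0 l)
              exact mul_le_mul_of_nonneg_right (by linarith) (Nat.cast_nonneg l)
            · exact pow_le_one₀ h0 h1
            · exact pow_nonneg h0 l
            · exact mul_nonneg (mul_nonneg zero_le_one (Nat.cast_nonneg l)) (hQ0 l)
        _ = (l : ℝ) * Q l := by ring
  have hs3 : Summable fun l : ℕ => Q l * (1 - z ^ l) := by
    apply hsQ.of_nonneg_of_le
    · intro l
      exact mul_nonneg (hQ0 l) (by nlinarith [pow_le_one₀ h0 h1 (n := l)])
    · intro l
      exact mul_le_of_le_one_right (hQ0 l) (by nlinarith [pow_nonneg h0 l])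
  -- key chain
  have step1 : 1 - gen Q z = ∑' l : ℕ, Q l * (1 - z ^ l) := by
    have he : (fun l : ℕ => Q l * (1 - z ^ l)) = fun l : ℕ => Q l - Q l * z ^ l := by
      funext l; ring
    rw [he, Summable.tsum_sub hsQ hsz, hQsum.tsum_eq]; rfl
  have step2 : ∑' l : ℕ, (1 - z) * ((l : ℝ) * Q l * z ^ l) ≤ ∑' l : ℕ, Q l * (1 - z ^ l) := by
    apply Summable.tsum_le_tsum _ (by simpa [mul_assoc] using hs2) hs3
    intro l
    calc (1 - z) * ((l : ℝ) * Q l * z ^ l) = Q l * ((1 - z) * (l : ℝ) * z ^ l) := by ring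
      _ ≤ Q l * (1 - z ^ l) := mul_le_mul_of_nonneg_left (one_sub_pow_ge h0 h1 l) (hQ0 l)
  have hszl : Summable fun l : ℕ => (l : ℝ) * Q l * z ^ l := by
    apply hslq.of_nonneg_of_le
    · intro l
      exact mul_nonneg (mul_nonneg (Nat.cast_nonneg l) (hQ0 l)) (pow_nonneg h0 l)
    · intro l
      exact mul_le_of_le_one_right (mul_nonneg (Nat.cast_nonneg l) (hQ0 l)) (pow_le_one₀ h0 h1)
  have step3 : (1:ℝ) < ∑' l : ℕ, (l : ℝ) * Q l * z ^ l := by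
    calc (1:ℝ) < ∑ i ∈ Finset.range N, (i : ℝ) * Q i * z ^ i := hz1
      _ ≤ ∑' l : ℕ, (l : ℝ) * Q l * z ^ l := by
          apply Summable.sum_le_tsum _ _ hszl
          intro l _
          exact mul_nonneg (mul_nonneg (Nat.cast_nonneg l) (hQ0 l)) (pow_nonneg h0 l)
  have step4 : (1 - z) * 1 < (1 - z) * ∑' l : ℕ, (l : ℝ) * Q l * z ^ l :=
    mul_lt_mul_of_pos_left step3 (by linarith [hz.2])
  rw [tsum_mul_left.symm] at step4
  have : 1 - z < 1 - gen Q z := by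
    rw [step1]
    calc 1 - z = (1 - z) * 1 := (mul_one _).symm
      _ < ∑' l : ℕ, (1 - z) * ((l : ℝ) * Q l * z ^ l) := step4
      _ ≤ ∑' l : ℕ, Q l * (1 - z ^ l) := step2
  linarith


lemma gen_chord {p : ℕ → ℝ} (hp0 : ∀ l, 0 ≤ p l) (hps : HasSum p 1) {x y z : ℝ}
    (hx : x ∈ Icc (0:ℝ) 1) (hy : y ∈ Icc (0:ℝ) 1) (hxz : x ≤ z) (hzy : z ≤ y) (hxy : x < y) :
    gen p z ≤ ((y - z) * gen p x + (z - x) * gen p y) / (y - x) := by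
  have hd : (0:ℝ) < y - x := by linarith
  have hd' : y - x ≠ 0 := ne_of_gt hd
  have ha0 : 0 ≤ (y - z) / (y - x) := div_nonneg (by linarith) hd.le
  have hb0 : 0 ≤ (z - x) / (y - x) := div_nonneg (by linarith) hd.le
  have hab : (y - z) / (y - x) + (z - x) / (y - x) = 1 := by
    rw [← add_div, div_eq_one_iff_eq hd']; ring
  have hz : ((y - z) / (y - x)) • x + ((z - x) / (y - x)) • y = z := by
    rw [smul_eq_mul, smul_eq_mul, div_mul_eq_mul_div, div_mul_eq_mul_div, ← add_div,
      div_eq_iff hd']; ring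
  have h := (gen_convexOn hp0 hps.summable).2 hx hy ha0 hb0 hab
  rw [hz] at h
  calc gen p z ≤ ((y - z) / (y - x)) • gen p x + ((z - x) / (y - x)) • gen p y := h
    _ = ((y - z) * gen p x + (z - x) * gen p y) / (y - x) := by
        rw [smul_eq_mul, smul_eq_mul, div_mul_eq_mul_div, div_mul_eq_mul_div, ← add_div]

lemma rho_nonneg {p : ℕ → ℝ} (hps : HasSum p 1) : 0 ≤ sInf (fixset p) :=
  le_csInf ⟨1, one_mem_fixset hps⟩ fun w hw => hw.1.1

lemma rho_le_one {p : ℕ → ℝ} (hps : HasSum p 1) : sInf (fixset p) ≤ 1 :=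
  csInf_le (bddBelow_fixset p) (one_mem_fixset hps)

lemma rho_lt_of_gen_lt {p : ℕ → ℝ} (hp0 : ∀ l, 0 ≤ p l) (hps : HasSum p 1) {z : ℝ}
    (h0 : 0 ≤ z) (h1 : z ≤ 1) (hlt : gen p z < z) : sInf (fixset p) < z := by
  obtain ⟨w, hw, hwz⟩ := exists_fixed_le hp0 hps h0 h1 hlt
  have h2 := csInf_le (bddBelow_fixset p) hw
  rcases lt_or_eq_of_le (le_trans h2 hwz) with h | h
  · exact h
  · exfalso; have := (sInf_fixset_mem hp0 hps).2; rw [h] at this; linarith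

lemma lt_gen_below {p : ℕ → ℝ} (hp0 : ∀ l, 0 ≤ p l) (hps : HasSum p 1) {z : ℝ}
    (h0 : 0 ≤ z) (hz : z < sInf (fixset p)) : z < gen p z := by
  by_contra h
  push_neg at h
  have h1 : z ≤ 1 := le_trans hz.le (rho_le_one hps)
  rcases lt_or_eq_of_le h with h | h
  · exact absurd (rho_lt_of_gen_lt hp0 hps h0 h1 h) (by linarith)
  · have : z ∈ fixset p := ⟨⟨h0, h1⟩, h⟩
    exact absurd (csInf_le (bddBelow_fixset p) this) (by linarith)

lemma gen_lt_above {Q : ℕ → ℝ} (hQ0 : ∀ l, 0 ≤ Q l) (hQsum : HasSum Q 1)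
    {ν : ℝ} (hν : HasSum (fun l : ℕ => (l : ℝ) * Q l) ν) (hν1 : 1 < ν) {z : ℝ}
    (hz : sInf (fixset Q) < z) (hz1 : z < 1) : gen Q z < z := by
  obtain ⟨z1, hz10, hz11, hz1lt⟩ := exists_gen_lt hQ0 hQsum hν hν1
  set ρ := sInf (fixset Q) with hρdef
  have hρz1 : ρ < z1 := rho_lt_of_gen_lt hQ0 hQsum hz10 hz11.le hz1lt
  have hρmem := sInf_fixset_mem hQ0 hQsum
  have hρ0 : 0 ≤ ρ := rho_nonneg hQsum
  have hρ1 : ρ ≤ 1 := rho_le_one hQsum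
  have hz0 : 0 ≤ z := le_trans hρ0 hz.le
  rcases le_or_gt z z1 with hcase | hcase
  · rcases eq_or_lt_of_le hcase with heq | hlt'
    · rw [heq]; exact hz1lt
    · have hchord := gen_chord hQ0 hQsum (x := ρ) (y := z1) ⟨hρ0, hρ1⟩ ⟨hz10, hz11.le⟩
        hz.le hcase hρz1
      rw [hρmem.2] at hchord
      have hd : (0:ℝ) < z1 - ρ := by linarith
      have : ((z1 - z) * ρ + (z - ρ) * gen Q z1) / (z1 - ρ) < z := by
        rw [div_lt_iff₀ hd]
        nlinarith
      linarith
  · have hchord := gen_chord hQ0 hQsum (x := z1) (y := 1) ⟨hz10, hz11.le⟩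
      ⟨zero_le_one, le_rfl⟩ hcase.le hz1.le hz11
    rw [gen_one hQsum] at hchord
    have hd : (0:ℝ) < 1 - z1 := by linarith
    have : ((1 - z) * gen Q z1 + (z - z1) * 1) / (1 - z1) < z := by
      rw [div_lt_iff₀ hd]
      nlinarith
    linarith

lemma gen_tail_bound {p : ℕ → ℝ} (hp0 : ∀ l, 0 ≤ p l) (hps : HasSum p 1) {z : ℝ}
    (h0 : 0 ≤ z) (h1 : z ≤ 1) (L : ℕ) :
    |gen p z - ∑ l ∈ Finset.range L, p l * z ^ l| ≤ z ^ L := by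
  have hs := summable_gen hp0 hps.summable h0 h1
  have hsplit := (Summable.sum_add_tsum_nat_add (f := fun l : ℕ => p l * z ^ l) L hs).symm
  have htail0 : 0 ≤ ∑' i : ℕ, p (i + L) * z ^ (i + L) :=
    tsum_nonneg fun i => mul_nonneg (hp0 _) (pow_nonneg h0 _)
  have htail : ∑' i : ℕ, p (i + L) * z ^ (i + L) ≤ z ^ L := by
    have hsub : Summable fun i : ℕ => p (i + L) :=
      (summable_nat_add_iff (f := p) L).2 hps.summable
    calc ∑' i : ℕ, p (i + L) * z ^ (i + L) ≤ ∑' i : ℕ, p (i + L) * z ^ L := by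
          apply Summable.tsum_le_tsum _ ((summable_nat_add_iff (f := fun l : ℕ => p l * z ^ l) L).2 hs)
            (hsub.mul_right _)
          intro i
          apply mul_le_mul_of_nonneg_left _ (hp0 _)
          exact pow_le_pow_of_le_one h0 h1 (Nat.le_add_left L i)
      _ = (∑' i : ℕ, p (i + L)) * z ^ L := tsum_mul_right
      _ ≤ 1 * z ^ L := by
          apply mul_le_mul_of_nonneg_right _ (pow_nonneg h0 L)
          have := (Summable.sum_add_tsum_nat_add (f := p) L hps.summable).symm
          rw [hps.tsum_eq] at this
          have hfin : 0 ≤ ∑ i ∈ Finset.range L, p i := Finset.sum_nonneg fun i _ => hp0 i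
          linarith
      _ = z ^ L := one_mul _
  have : gen p z - ∑ l ∈ Finset.range L, p l * z ^ l = ∑' i : ℕ, p (i + L) * z ^ (i + L) := by
    rw [gen]; linarith [hsplit]
  rw [this, abs_of_nonneg htail0]
  exact htail

lemma gen_tendsto (q : ℕ → ℕ → ℝ) (hq0 : ∀ n l, 0 ≤ q n l) (hqsum : ∀ n, HasSum (q n) 1)
    (Q : ℕ → ℝ) (hQ0 : ∀ l, 0 ≤ Q l) (hQsum : HasSum Q 1)
    (hdist : ∀ l, Tendsto (fun n => q n l) atTop (nhds (Q l)))
    {z : ℝ} (h0 : 0 ≤ z) (h1 : z < 1) :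
    Tendsto (fun n => gen (q n) z) atTop (nhds (gen Q z)) := by
  rw [Metric.tendsto_atTop]
  intro ε hε
  obtain ⟨L, hL⟩ := exists_pow_lt_of_lt_one (show (0:ℝ) < ε / 4 by linarith) h1
  have hfin : Tendsto (fun n => ∑ l ∈ Finset.range L, q n l * z ^ l) atTop
      (nhds (∑ l ∈ Finset.range L, Q l * z ^ l)) :=
    tendsto_finset_sum _ fun l _ => (hdist l).mul_const _
  have hev : ∀ᶠ n in atTop,
      dist (∑ l ∈ Finset.range L, q n l * z ^ l) (∑ l ∈ Finset.range L, Q l * z ^ l) < ε / 2 :=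
    hfin (Metric.ball_mem_nhds _ (by linarith))
  obtain ⟨N, hN⟩ := eventually_atTop.mp hev
  refine ⟨N, fun n hn => ?_⟩
  have h1' := gen_tail_bound (hq0 n) (hqsum n) h0 h1.le L
  have h2' := gen_tail_bound hQ0 hQsum h0 h1.le L
  have h3' := hN n hn
  rw [Real.dist_eq] at h3' ⊢
  have : gen (q n) z - gen Q z =
      (gen (q n) z - ∑ l ∈ Finset.range L, q n l * z ^ l)
      + (∑ l ∈ Finset.range L, q n l * z ^ l - ∑ l ∈ Finset.range L, Q l * z ^ l)
      - (gen Q z - ∑ l ∈ Finset.range L, Q l * z ^ l) := by ring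
  rw [this]
  calc |_ + _ - _| ≤ |gen (q n) z - ∑ l ∈ Finset.range L, q n l * z ^ l|
        + |∑ l ∈ Finset.range L, q n l * z ^ l - ∑ l ∈ Finset.range L, Q l * z ^ l|
        + |gen Q z - ∑ l ∈ Finset.range L, Q l * z ^ l| := by
          apply (abs_sub _ _).trans
          apply add_le_add_left (abs_add_le _ _)
    _ < ε := by linarith

/-- If probability distributions `q n` on ℕ converge in distribution and in expectation to a
distribution `q` with mean `ν > 1` (and `q 1 < 1`), then the survival probabilities
`s n = 1 - ρ n` of the Galton–Watson processes with offspring distributions `q n` converge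
to the survival probability `s = 1 - ρ > 0` of the limit process, where `ρ n` (resp. `ρ`) is
the smallest fixed point in `[0,1]` of the corresponding generating function. -/
theorem survival_probability_tendsto
    (q : ℕ → ℕ → ℝ) (hq0 : ∀ n l, 0 ≤ q n l) (hqsum : ∀ n, HasSum (q n) 1)
    (Q : ℕ → ℝ) (hQ0 : ∀ l, 0 ≤ Q l) (hQsum : HasSum Q 1) (hQ1 : Q 1 < 1)
    (ν : ℝ) (hν : HasSum (fun l : ℕ => (l : ℝ) * Q l) ν) (hν1 : 1 < ν)
    (hdist : ∀ l, Tendsto (fun n => q n l) atTop (nhds (Q l)))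
    (hmean : ∀ n, Summable (fun l : ℕ => (l : ℝ) * q n l))
    (hmeanlim : Tendsto (fun n => ∑' l : ℕ, (l : ℝ) * q n l) atTop (nhds ν))
    (ρn : ℕ → ℝ)
    (hρn : ∀ n, ρn n = sInf {z : ℝ | z ∈ Set.Icc (0 : ℝ) 1 ∧ ∑' l : ℕ, q n l * z ^ l = z})
    (ρ : ℝ) (hρ : ρ = sInf {z : ℝ | z ∈ Set.Icc (0 : ℝ) 1 ∧ ∑' l : ℕ, Q l * z ^ l = z}) :
    Tendsto (fun n => 1 - ρn n) atTop (nhds (1 - ρ)) ∧ 0 < 1 - ρ := by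
  have hρ' : ρ = sInf (fixset Q) := hρ
  have hρn' : ∀ n, ρn n = sInf (fixset (q n)) := hρn
  -- ρ < 1
  obtain ⟨z1, hz10, hz11, hz1lt⟩ := exists_gen_lt hQ0 hQsum hν hν1
  have hρlt1 : ρ < 1 := by
    rw [hρ']
    exact lt_of_lt_of_le (rho_lt_of_gen_lt hQ0 hQsum hz10 hz11.le hz1lt) hz11.le
  have hρ0 : 0 ≤ ρ := hρ' ▸ rho_nonneg hQsum
  refine ⟨?_, by linarith⟩
  have htendsto : Tendsto ρn atTop (nhds ρ) := by
    rw [Metric.tendsto_atTop]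
    intro ε hε
    -- upper bound point
    set z0 : ℝ := min (ρ + ε / 2) ((ρ + 1) / 2) with hz0def
    have hz0ρ : ρ < z0 := lt_min (by linarith) (by linarith)
    have hz0lt1 : z0 < 1 := lt_of_le_of_lt (min_le_right _ _) (by linarith)
    have hz00 : 0 ≤ z0 := le_trans hρ0 hz0ρ.le
    have hz0le : z0 ≤ ρ + ε / 2 := min_le_left _ _
    have hgenz0 : gen Q z0 < z0 := gen_lt_above hQ0 hQsum hν hν1 (hρ' ▸ hz0ρ) hz0lt1
    have hupper : ∀ᶠ n in atTop, gen (q n) z0 < z0 :=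
      (gen_tendsto q hq0 hqsum Q hQ0 hQsum hdist hz00 hz0lt1) (Iio_mem_nhds hgenz0)
    -- lower bound
    have hlower : ∀ᶠ n in atTop, ρ - ε < ρn n := by
      rcases lt_or_ge ρ ε with hcase | hcase
      · filter_upwards with n
        have : 0 ≤ ρn n := (hρn' n) ▸ rho_nonneg (hqsum n)
        linarith
      · obtain ⟨z1', hz1'def⟩ : ∃ x : ℝ, x = ρ - ε / 2 := ⟨_, rfl⟩
        have hz1'0 : 0 ≤ z1' := by rw [hz1'def]; linarith
        have hz1'ρ : z1' < ρ := by rw [hz1'def]; linarith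
        have hz1'lt1 : z1' < 1 := by linarith
        have hgenz1' : z1' < gen Q z1' := lt_gen_below hQ0 hQsum hz1'0 (hρ' ▸ hz1'ρ)
        have hev : ∀ᶠ n in atTop, z1' < gen (q n) z1' :=
          (gen_tendsto q hq0 hqsum Q hQ0 hQsum hdist hz1'0 hz1'lt1) (Ioi_mem_nhds hgenz1')
        filter_upwards [hev] with n hn
        by_contra hcon
        push_neg at hcon
        have hmem : ρn n ∈ fixset (q n) := (hρn' n) ▸ sInf_fixset_mem (hq0 n) (hqsum n)
        have : gen (q n) z1' ≤ z1' :=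
          gen_le_of_fixed (hq0 n) (hqsum n) hmem (by linarith) hz1'lt1.le
        linarith
    have hupper' : ∀ᶠ n in atTop, ρn n < ρ + ε := by
      filter_upwards [hupper] with n hn
      obtain ⟨w, hw, hwz⟩ := exists_fixed_le (hq0 n) (hqsum n) hz00 hz0lt1.le hn
      have := csInf_le (bddBelow_fixset (q n)) hw
      rw [← hρn' n] at this
      linarith
    obtain ⟨N, hN⟩ := eventually_atTop.mp (hlower.and hupper')
    refine ⟨N, fun n hn => ?_⟩
    rw [Real.dist_eq, abs_sub_lt_iff]
    obtain ⟨h1, h2⟩ := hN n hn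
    constructor <;> linarith
  exact ((tendsto_const_nhds (x := (1:ℝ))).sub htendsto)
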